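/- arXiv:1702.05003 — 2 statements merged into one kernel-verified Lean document; each statement's English description precedes it below -/
import Mathlib

section
/- For every complex number z = x + iy with real part x ≤ 0, one has |e^z - 1| ≤ √2 |z|. -/
theorem abs_cexp_sub_one_le_of_re_nonpos (z : ℂ) (hz : z.re ≤ 0) :
    ‖Complex.exp z - 1‖ ≤ Real.sqrt 2 * ‖z‖ := by
  set x := z.re
  set y := z.im
  have hex : Real.exp x ≤ 1 := Real.exp_le_one_iff.mpr hz
  have hex0 : (0:ℝ) < Real.exp x := Real.exp_pos x
  have key : ‖Complex.exp z - 1‖ ≤ ‖z‖ := by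
    have h1 : Complex.normSq (Complex.exp z - 1)
        = (Real.exp x * Real.cos y - 1)^2 + (Real.exp x * Real.sin y)^2 := by
      simp [Complex.normSq_apply, Complex.exp_re, Complex.exp_im, sq, x, y]
    have h2 : (Real.exp x * Real.cos y - 1)^2 + (Real.exp x * Real.sin y)^2
        = (Real.exp x - 1)^2 + 2 * Real.exp x * (1 - Real.cos y) := by
      have := Real.sin_sq_add_cos_sq y
      nlinarith [Real.sin_sq_add_cos_sq y]
    have hx2 : (Real.exp x - 1)^2 ≤ x^2 := by
      have h3 : x + 1 ≤ Real.exp x := Real.add_one_le_exp x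
      nlinarith
    have hy2 : 2 * Real.exp x * (1 - Real.cos y) ≤ y^2 := by
      have hc : 1 - y^2/2 ≤ Real.cos y := Real.one_sub_sq_div_two_le_cos
      have hc1 : Real.cos y ≤ 1 := Real.cos_le_one y
      nlinarith
    have hns : Complex.normSq (Complex.exp z - 1) ≤ Complex.normSq z := by
      rw [h1, h2, Complex.normSq_apply]
      nlinarith
    have := Real.sqrt_le_sqrt hns
    simpa [Complex.norm_def] using this
  calc ‖Complex.exp z - 1‖ ≤ ‖z‖ := key
    _ = 1 * ‖z‖ := (one_mul _).symm
    _ ≤ Real.sqrt 2 * ‖z‖ := by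
        gcongr
        exact Real.one_le_sqrt.mpr one_le_two
end

section
/- Let N be a Poisson random variable with parameter λ > 0, independent of an i.i.d. sequence (X_i) of real random variables with E[|X_1|^p] < ∞ for some 0 < p ≤ 2. Then Y = ∑_{i=1}^N X_i satisfies E[|Y|^p] ≤ E[N^2] · E[|X_1|^p] < ∞. -/
open MeasureTheory ProbabilityTheory
open scoped ENNReal NNReal

lemma aux_rpow_sum_le {p : ℝ} (hp : 0 < p) (hp1 : p ≤ 1) (n : ℕ) (c : ℕ → ℝ≥0∞) :
    (∑ i ∈ Finset.range n, c i) ^ p ≤ ∑ i ∈ Finset.range n, c i ^ p := by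
  induction n with
  | zero => simp [ENNReal.zero_rpow_of_pos hp]
  | succ n ih =>
    rw [Finset.sum_range_succ, Finset.sum_range_succ]
    exact le_trans (ENNReal.rpow_add_le_add_rpow _ _ hp.le hp1) (add_le_add_left ih _)

lemma aux_sum_pow_le {p : ℝ} (hp : 0 < p) (hp2 : p ≤ 2) (n : ℕ) (c : ℕ → ℝ≥0∞) :
    (∑ i ∈ Finset.range n, c i) ^ p ≤ (n : ℝ≥0∞) * ∑ i ∈ Finset.range n, c i ^ p := by
  rcases Nat.eq_zero_or_pos n with rfl | hn
  · simp [ENNReal.zero_rpow_of_pos hp]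
  have hn1 : (1 : ℝ≥0∞) ≤ (n : ℝ≥0∞) := by exact_mod_cast hn
  rcases le_total p 1 with h1 | h1
  · exact (aux_rpow_sum_le hp h1 n c).trans (le_mul_of_one_le_left zero_le hn1)
  · have hn0 : (n : ℝ≥0∞) ≠ 0 := by exact_mod_cast hn.ne'
    have hnt : (n : ℝ≥0∞) ≠ ⊤ := ENNReal.natCast_ne_top n
    have hmean := ENNReal.rpow_arith_mean_le_arith_mean_rpow
      (s := Finset.range n) (fun _ => (n : ℝ≥0∞)⁻¹) c ?_ h1
    · set S := ∑ i ∈ Finset.range n, c i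
      set T := ∑ i ∈ Finset.range n, c i ^ p
      rw [← Finset.mul_sum, ← Finset.mul_sum, ENNReal.mul_rpow_of_nonneg _ _ hp.le] at hmean
      -- hmean : (n⁻¹)^p * S^p ≤ n⁻¹ * T
      have h2 : S ^ p ≤ (n : ℝ≥0∞) ^ p * ((n : ℝ≥0∞)⁻¹ * T) := by
        calc S ^ p = ((n : ℝ≥0∞) ^ p * ((n : ℝ≥0∞)⁻¹) ^ p) * S ^ p := by
              rw [← ENNReal.mul_rpow_of_nonneg _ _ hp.le, ENNReal.mul_inv_cancel hn0 hnt,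
                ENNReal.one_rpow, one_mul]
          _ = (n : ℝ≥0∞) ^ p * (((n : ℝ≥0∞)⁻¹) ^ p * S ^ p) := by ring
          _ ≤ (n : ℝ≥0∞) ^ p * ((n : ℝ≥0∞)⁻¹ * T) := by
              exact mul_le_mul_right hmean _
      have h3 : (n : ℝ≥0∞) ^ p * ((n : ℝ≥0∞)⁻¹ * T) = (n : ℝ≥0∞) ^ (p - 1) * T := by
        rw [← mul_assoc, ← ENNReal.rpow_neg_one, ← ENNReal.rpow_add _ _ hn0 hnt]
        rw [sub_eq_add_neg]
      have h4 : (n : ℝ≥0∞) ^ (p - 1) ≤ (n : ℝ≥0∞) := by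
        calc (n : ℝ≥0∞) ^ (p - 1) ≤ (n : ℝ≥0∞) ^ (1 : ℝ) :=
              ENNReal.rpow_le_rpow_of_exponent_le hn1 (by linarith)
          _ = (n : ℝ≥0∞) := ENNReal.rpow_one _
      exact h2.trans (h3.le.trans (mul_le_mul_left h4 _))
    · rw [Finset.sum_const, Finset.card_range, nsmul_eq_mul, ENNReal.mul_inv_cancel hn0 hnt]

lemma aux_pointwise {p : ℝ} (hp : 0 < p) (hp2 : p ≤ 2) (n : ℕ) (a : ℕ → ℝ) :
    ENNReal.ofReal (|∑ i ∈ Finset.range n, a i| ^ p) ≤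
      (n : ℝ≥0∞) * ∑ i ∈ Finset.range n, ENNReal.ofReal (|a i| ^ p) := by
  calc ENNReal.ofReal (|∑ i ∈ Finset.range n, a i| ^ p)
      = (ENNReal.ofReal |∑ i ∈ Finset.range n, a i|) ^ p :=
        (ENNReal.ofReal_rpow_of_nonneg (abs_nonneg _) hp.le).symm
    _ ≤ (∑ i ∈ Finset.range n, ENNReal.ofReal |a i|) ^ p := by
        apply ENNReal.rpow_le_rpow _ hp.le
        rw [← ENNReal.ofReal_sum_of_nonneg (fun i _ => abs_nonneg _)]
        exact ENNReal.ofReal_le_ofReal (Finset.abs_sum_le_sum_abs _ _)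
    _ ≤ (n : ℝ≥0∞) * ∑ i ∈ Finset.range n, (ENNReal.ofReal |a i|) ^ p :=
        aux_sum_pow_le hp hp2 n _
    _ = (n : ℝ≥0∞) * ∑ i ∈ Finset.range n, ENNReal.ofReal (|a i| ^ p) := by
        congr 1
        exact Finset.sum_congr rfl fun i _ =>
          ENNReal.ofReal_rpow_of_nonneg (abs_nonneg _) hp.le

lemma aux_poisson_summable (lam : ℝ≥0) :
    Summable (fun n : ℕ => (n : ℝ) ^ 2 * poissonPMFReal lam n) := by
  have hg_sum : Summable (fun n : ℕ =>
      Real.exp (-(lam : ℝ)) * ((4 * (lam : ℝ)) ^ n / n.factorial)) :=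
    (Real.summable_pow_div_factorial (4 * (lam : ℝ))).mul_left _
  refine Summable.of_nonneg_of_le
    (fun n => mul_nonneg (by positivity) poissonPMFReal_nonneg) (fun n => ?_) hg_sum
  unfold poissonPMFReal
  have h1 : (n : ℝ) ^ 2 ≤ 4 ^ n := by
    have h2 : n ^ 2 ≤ 4 ^ n := by
      calc n ^ 2 ≤ (2 ^ n) ^ 2 := Nat.pow_le_pow_left (Nat.lt_two_pow_self (n := n)).le 2
        _ = 4 ^ n := by rw [← pow_mul, mul_comm, pow_mul]; norm_num
    exact_mod_cast h2
  have hlam0 : (0:ℝ) ≤ (lam : ℝ) := lam.coe_nonneg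
  calc (n : ℝ) ^ 2 * (Real.exp (-(lam:ℝ)) * (lam:ℝ) ^ n / n.factorial)
      = Real.exp (-(lam:ℝ)) * (((n:ℝ)^2 * (lam:ℝ) ^ n) / n.factorial) := by ring
    _ ≤ Real.exp (-(lam:ℝ)) * ((4 * (lam : ℝ)) ^ n / n.factorial) := by
        apply mul_le_mul_of_nonneg_left _ (Real.exp_nonneg _)
        apply div_le_div_of_nonneg_right _ (by positivity)
        rw [mul_pow]
        exact mul_le_mul_of_nonneg_right h1 (pow_nonneg hlam0 n)

lemma aux_poisson_sq (lam : ℝ≥0) :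
    (∑' n : ℕ, (n : ℝ≥0∞) ^ 2 * ENNReal.ofReal (poissonPMFReal lam n)) < ⊤ := by
  have hterm : ∀ n : ℕ, (n : ℝ≥0∞) ^ 2 * ENNReal.ofReal (poissonPMFReal lam n) =
      ENNReal.ofReal ((n : ℝ) ^ 2 * poissonPMFReal lam n) := by
    intro n
    rw [ENNReal.ofReal_mul (by positivity)]
    congr 1
    rw [← ENNReal.ofReal_natCast n, ← ENNReal.ofReal_pow (Nat.cast_nonneg n)]
  simp_rw [hterm]
  rw [← ENNReal.ofReal_tsum_of_nonneg
    (fun n => mul_nonneg (by positivity) poissonPMFReal_nonneg) (aux_poisson_summable lam)]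
  exact ENNReal.ofReal_lt_top


theorem compound_poisson_moment_bound
    {Ω : Type*} [MeasurableSpace Ω] (P : Measure Ω) [IsProbabilityMeasure P]
    (lam : NNReal) (hlam : 0 < lam)
    (N : Ω → ℕ) (hN : Measurable N) (hNlaw : P.map N = poissonMeasure lam)
    (X : ℕ → Ω → ℝ) (hXmeas : ∀ i, Measurable (X i))
    (hindep : iIndepFun X P)
    (hident : ∀ i, IdentDistrib (X i) (X 0) P P)
    (hNX : IndepFun N (fun ω i => X i ω) P)
    (p : ℝ) (hp : 0 < p) (hp2 : p ≤ 2)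
    (hmom : ∫⁻ ω, ENNReal.ofReal (|X 0 ω| ^ p) ∂P < ⊤) :
    ∫⁻ ω, ENNReal.ofReal (|∑ i ∈ Finset.range (N ω), X i ω| ^ p) ∂P ≤
        (∫⁻ ω, (N ω : ℝ≥0∞) ^ 2 ∂P) * ∫⁻ ω, ENNReal.ofReal (|X 0 ω| ^ p) ∂P ∧
    ∫⁻ ω, ENNReal.ofReal (|∑ i ∈ Finset.range (N ω), X i ω| ^ p) ∂P < ⊤ := by
  classical
  set m : ℝ≥0∞ := ∫⁻ ω, ENNReal.ofReal (|X 0 ω| ^ p) ∂P with hm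
  set h : ℕ → Ω → ℝ≥0∞ := fun i ω => ENNReal.ofReal (|X i ω| ^ p) with hh
  have hreal_meas : Measurable (fun x : ℝ => ENNReal.ofReal (|x| ^ p)) :=
    (((Real.continuous_rpow_const hp.le).measurable).comp measurable_abs).ennreal_ofReal
  have hhmeas : ∀ i, Measurable (h i) := fun i => hreal_meas.comp (hXmeas i)
  have hhint : ∀ i, ∫⁻ ω, h i ω ∂P = m := fun i =>
    ((hident i).comp hreal_meas).lintegral_eq
  set q : ℕ → ℝ≥0∞ := fun n => P (N ⁻¹' {n}) with hq
  have hqval : ∀ n, q n = ENNReal.ofReal (poissonPMFReal lam n) := by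
    intro n
    have h1 : P.map N {n} = P (N ⁻¹' {n}) :=
      Measure.map_apply hN (measurableSet_singleton n)
    show P (N ⁻¹' {n}) = ENNReal.ofReal (poissonPMFReal lam n)
    rw [← h1, hNlaw, poissonMeasure_singleton]
    rfl
  -- step 1 : pointwise bound and monotonicity
  have step1 : ∫⁻ ω, ENNReal.ofReal (|∑ i ∈ Finset.range (N ω), X i ω| ^ p) ∂P ≤
      ∫⁻ ω, (N ω : ℝ≥0∞) * ∑ i ∈ Finset.range (N ω), h i ω ∂P :=
    lintegral_mono fun ω => aux_pointwise hp hp2 (N ω) (fun i => X i ω)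
  -- step 2 : compute the RHS using independence
  set g : ℕ → Ω → ℝ≥0∞ := fun n ω =>
    if N ω = n then (n : ℝ≥0∞) * ∑ i ∈ Finset.range n, h i ω else 0 with hg
  have hgmeas : ∀ n, Measurable (g n) := by
    intro n
    apply Measurable.ite (hN (measurableSet_singleton n))
    · exact (measurable_const.mul (Finset.measurable_sum _ fun i _ => hhmeas i))
    · exact measurable_const
  have hGsum : (fun ω => (N ω : ℝ≥0∞) * ∑ i ∈ Finset.range (N ω), h i ω) =
      fun ω => ∑' n : ℕ, g n ω := by
    funext ω
    rw [tsum_eq_single (N ω) (fun n hn => by simp [hg, Ne.symm hn])]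
    simp [hg]
  have hFmeas : Measurable (fun ω i => X i ω) :=
    measurable_pi_lambda _ fun i => hXmeas i
  have hgint : ∀ n : ℕ, ∫⁻ ω, g n ω ∂P = (n : ℝ≥0∞) ^ 2 * q n * m := by
    intro n
    set φ : ℕ → ℝ≥0∞ := fun k => if k = n then (n : ℝ≥0∞) else 0 with hφ
    set ψ : (ℕ → ℝ) → ℝ≥0∞ := fun v => ∑ i ∈ Finset.range n,
      ENNReal.ofReal (|v i| ^ p) with hψ
    have hφm : Measurable φ := measurable_from_nat
    have hψm : Measurable ψ :=
      Finset.measurable_sum _ fun i _ => hreal_meas.comp (measurable_pi_apply i)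
    have hprod : g n = (φ ∘ N) * (ψ ∘ (fun ω i => X i ω)) := by
      funext ω
      by_cases hωn : N ω = n <;> simp [hg, hφ, hψ, hωn, hh]
    have hsplit := lintegral_mul_eq_lintegral_mul_lintegral_of_indepFun
      (hφm.comp hN) (hψm.comp hFmeas) (hNX.comp hφm hψm) (μ := P)
    rw [hprod, hsplit]
    have hφint : ∫⁻ ω, (φ ∘ N) ω ∂P = (n : ℝ≥0∞) * q n := by
      have hid : (φ ∘ N) = (N ⁻¹' {n}).indicator (fun _ => (n : ℝ≥0∞)) := by
        funext ω
        by_cases hωn : N ω = n <;>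
          simp [hφ, Set.indicator, hωn]
      rw [hid, lintegral_indicator (hN (measurableSet_singleton n)),
        setLIntegral_const]
    have hψint : ∫⁻ ω, (ψ ∘ (fun ω i => X i ω)) ω ∂P = (n : ℝ≥0∞) * m := by
      have hrw : ∫⁻ ω, (ψ ∘ (fun ω i => X i ω)) ω ∂P =
          ∫⁻ ω, ∑ i ∈ Finset.range n, h i ω ∂P := rfl
      rw [hrw, lintegral_finset_sum _ fun i _ => hhmeas i]
      simp [hhint, Finset.sum_const, mul_comm]
    rw [hφint, hψint]
    ring
  have step2 : ∫⁻ ω, (N ω : ℝ≥0∞) * ∑ i ∈ Finset.range (N ω), h i ω ∂P =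
      (∑' n : ℕ, (n : ℝ≥0∞) ^ 2 * q n) * m := by
    rw [hGsum, lintegral_tsum fun n => (hgmeas n).aemeasurable]
    simp_rw [hgint]
    rw [ENNReal.tsum_mul_right]
  -- step 3 : identify E[N^2]
  have step3 : ∫⁻ ω, (N ω : ℝ≥0∞) ^ 2 ∂P = ∑' n : ℕ, (n : ℝ≥0∞) ^ 2 * q n := by
    have hfm : Measurable (fun k : ℕ => (k : ℝ≥0∞) ^ 2) := measurable_from_nat
    rw [← lintegral_map hfm hN, lintegral_countable' (μ := P.map N)]
    exact tsum_congr fun n => by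
      rw [Measure.map_apply hN (measurableSet_singleton n)]
  -- step 4 : finiteness of E[N^2]
  have step4 : (∑' n : ℕ, (n : ℝ≥0∞) ^ 2 * q n) < ⊤ := by
    simp_rw [hqval]
    exact aux_poisson_sq lam
  -- conclude
  have hbound := step1.trans_eq step2
  rw [← step3] at hbound
  refine ⟨hbound, hbound.trans_lt ?_⟩
  rw [step3]
  exact ENNReal.mul_lt_top step4 hmom
end
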